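/- Let α > 0, μ > 0, σ > 0, let Z₁, …, Z_T be i.i.d. Gaussian random variables with mean μ and variance σ², and let 𝒢_t = σ(Z₁, …, Z_t) (with 𝒢₀ trivial). Then for every bounded stochastic process (a_t)_{t=0}^{T−1} with each a_t measurable with respect to 𝒢_t, one has EXD_α[ Σ_{t=0}^{T−1} a_t Z_{t+1} ] ≤ T·μ²/(2ασ²), and equality holds for the constant strategy a_t ≡ μ/(ασ²). In particular, the optimal risk-averse value at time 0 is V* = Tμ²/(2ασ²). -/

import Mathlib

open MeasureTheory ProbabilityTheory Real
open scoped NNReal ENNReal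

namespace EntropicAux

lemma pdf_shift {v : ℝ≥0} (hv : (v:ℝ) ≠ 0) (μ t x : ℝ) :
    rexp (t * x) * gaussianPDFReal μ v x
      = rexp (t * μ + v * t ^ 2 / 2) * gaussianPDFReal (μ + v * t) v x := by
  unfold gaussianPDFReal
  rw [mul_left_comm, ← Real.exp_add, mul_left_comm, ← Real.exp_add]
  congr 2
  field_simp
  ring

lemma integrable_exp_gauss {v : ℝ≥0} (hv : (v:ℝ) ≠ 0) (μ t : ℝ) :
    Integrable (fun x => rexp (t * x)) (gaussianReal μ v) := by
  have hv' : v ≠ 0 := fun h => hv (by simp [h])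
  rw [gaussianReal_of_var_ne_zero _ hv']
  have hmeas : Measurable fun x => (gaussianPDFReal μ v x).toNNReal :=
    (measurable_gaussianPDFReal μ v).real_toNNReal
  have h1 : (gaussianPDF μ v) = fun x => ((gaussianPDFReal μ v x).toNNReal : ℝ≥0∞) := rfl
  rw [h1, integrable_withDensity_iff_integrable_smul hmeas]
  have h2 : (fun x => (gaussianPDFReal μ v x).toNNReal • rexp (t * x))
      = fun x => rexp (t * μ + v * t ^ 2 / 2) * gaussianPDFReal (μ + v * t) v x := by
    ext x
    rw [NNReal.smul_def, Real.coe_toNNReal _ (gaussianPDFReal_nonneg μ v x), smul_eq_mul,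
      mul_comm (gaussianPDFReal μ v x) _, pdf_shift hv]
  rw [h2]
  exact (integrable_gaussianPDFReal _ _).const_mul _

lemma integral_exp_gauss {v : ℝ≥0} (hv : (v:ℝ) ≠ 0) (μ t : ℝ) :
    ∫ x, rexp (t * x) ∂(gaussianReal μ v) = rexp (t * μ + v * t ^ 2 / 2) := by
  have hv' : v ≠ 0 := fun h => hv (by simp [h])
  rw [gaussianReal_of_var_ne_zero _ hv']
  have hmeas : Measurable fun x => (gaussianPDFReal μ v x).toNNReal :=
    (measurable_gaussianPDFReal μ v).real_toNNReal
  have h1 : (gaussianPDF μ v) = fun x => ((gaussianPDFReal μ v x).toNNReal : ℝ≥0∞) := rfl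
  rw [h1, integral_withDensity_eq_integral_smul hmeas]
  have h2 : (fun x => (gaussianPDFReal μ v x).toNNReal • rexp (t * x))
      = fun x => rexp (t * μ + v * t ^ 2 / 2) * gaussianPDFReal (μ + v * t) v x := by
    ext x
    rw [NNReal.smul_def, Real.coe_toNNReal _ (gaussianPDFReal_nonneg μ v x), smul_eq_mul,
      mul_comm (gaussianPDFReal μ v x) _, pdf_shift hv]
  rw [h2, integral_const_mul, integral_gaussianPDFReal_eq_one _ hv', mul_one]

lemma lintegral_exp_gauss {v : ℝ≥0} (hv : (v:ℝ) ≠ 0) (μ t : ℝ) :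
    ∫⁻ x, ENNReal.ofReal (rexp (t * x)) ∂(gaussianReal μ v)
      = ENNReal.ofReal (rexp (t * μ + v * t ^ 2 / 2)) := by
  rw [← integral_exp_gauss hv μ t, ofReal_integral_eq_lintegral_ofReal
    (integrable_exp_gauss hv μ t) (Filter.Eventually.of_forall fun x => (Real.exp_pos _).le)]

end EntropicAux

open EntropicAux

theorem entropic_gaussian_multiperiod_value
    {Ω : Type*} {m₀ : MeasurableSpace Ω} (P : Measure Ω) [IsProbabilityMeasure P]
    {α : ℝ} (hα : 0 < α)
    {m σ : ℝ} (hm : 0 < m) (hσ : 0 < σ)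
    (T : ℕ)
    (Z : ℕ → Ω → ℝ) (hZmeas : ∀ t, Measurable (Z t))
    (hZindep : iIndepFun (m := fun _ => Real.measurableSpace) Z P)
    (hZgauss : ∀ t, Measure.map (Z t) P = gaussianReal m ⟨σ ^ 2, sq_nonneg σ⟩)
    (𝒢 : ℕ → MeasurableSpace Ω)
    (h𝒢 : ∀ t, 𝒢 t = ⨆ i ∈ Set.Icc 1 t, MeasurableSpace.comap (Z i) Real.measurableSpace)
    (EXD : (Ω → ℝ) → ℝ)
    (hEXD : EXD = fun X => -α⁻¹ * Real.log (∫ ω, Real.exp (-α * X ω) ∂P)) :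
    (∀ a : ℕ → Ω → ℝ,
      (∀ t, Measurable[𝒢 t] (a t)) →
      (∀ t, ∃ C : ℝ, ∀ ω, |a t ω| ≤ C) →
      EXD (fun ω => ∑ t ∈ Finset.range T, a t ω * Z (t + 1) ω) ≤
        T * m ^ 2 / (2 * α * σ ^ 2)) ∧
    EXD (fun ω => ∑ t ∈ Finset.range T, m / (α * σ ^ 2) * Z (t + 1) ω) =
      T * m ^ 2 / (2 * α * σ ^ 2) := by
  subst hEXD
  set v : ℝ≥0 := ⟨σ ^ 2, sq_nonneg σ⟩ with hv_def
  have hvcoe : (v : ℝ) = σ ^ 2 := rfl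
  have hσ2 : (0:ℝ) < σ ^ 2 := pow_pos hσ 2
  have hvne : (v : ℝ) ≠ 0 := by rw [hvcoe]; exact hσ2.ne'
  set q : ℝ := m ^ 2 / (2 * σ ^ 2) with hq_def
  have hq_pos : 0 < q := by positivity
  have h𝒢le : ∀ t, 𝒢 t ≤ m₀ := by
    intro t
    rw [h𝒢]
    exact iSup₂_le fun i _ => (hZmeas i).comap_le
  have h𝒢mono : ∀ {s t : ℕ}, s ≤ t → 𝒢 s ≤ 𝒢 t := by
    intro s t hst
    rw [h𝒢, h𝒢]
    exact biSup_mono fun i hi => ⟨hi.1, hi.2.trans hst⟩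
  have hZ𝒢 : ∀ {i n : ℕ}, 1 ≤ i → i ≤ n → Measurable[𝒢 n] (Z i) := by
    intro i n h1 h2
    rw [measurable_iff_comap_le, h𝒢]
    exact le_biSup (fun i => MeasurableSpace.comap (Z i) Real.measurableSpace)
      (Set.mem_Icc.mpr ⟨h1, h2⟩)
  have hindep : ∀ n : ℕ,
      Indep (𝒢 n) (MeasurableSpace.comap (Z (n+1)) Real.measurableSpace) P := by
    intro n
    rw [h𝒢]
    have hd : Disjoint (Set.Icc 1 n) ({n+1} : Set ℕ) := by
      rw [Set.disjoint_singleton_right]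
      simp
    have := indep_iSup_of_disjoint (fun i => (hZmeas i).comap_le) hZindep.iIndep hd
    simpa using this
  -- a helper for the exponent inequality
  have key_exp : ∀ b : ℝ, -q ≤ (-α * b) * m + σ ^ 2 * (-α * b) ^ 2 / 2 := by
    intro b
    have h : (-α * b) * m + σ ^ 2 * (-α * b) ^ 2 / 2 + q
        = (σ ^ 2 * (-α * b) + m) ^ 2 / (2 * σ ^ 2) := by
      rw [hq_def]; field_simp; ring
    nlinarith [div_nonneg (sq_nonneg (σ ^ 2 * (-α * b) + m)) (by positivity : (0:ℝ) ≤ 2 * σ ^ 2)]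
  -- the key lower bound, by induction
  have key : ∀ (a : ℕ → Ω → ℝ), (∀ t, Measurable[𝒢 t] (a t)) → ∀ n : ℕ,
      ENNReal.ofReal (rexp (-((n : ℝ) * q)))
        ≤ ∫⁻ ω, ENNReal.ofReal (rexp (-α * ∑ t ∈ Finset.range n, a t ω * Z (t+1) ω)) ∂P := by
    intro a ha n
    have ham : ∀ t, Measurable (a t) := fun t => (ha t).mono (h𝒢le t) le_rfl
    induction n with
    | zero => simp
    | succ n ih =>
      set Sn : Ω → ℝ := fun ω => ∑ t ∈ Finset.range n, a t ω * Z (t+1) ω with hSn_def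
      have hSnG : Measurable[𝒢 n] Sn := by
        apply Finset.measurable_sum
        intro t ht
        have htn : t < n := Finset.mem_range.1 ht
        exact ((ha t).mono (h𝒢mono htn.le) le_rfl).mul (hZ𝒢 (Nat.succ_le_succ (Nat.zero_le t)) htn)
      have hSnm : Measurable Sn := hSnG.mono (h𝒢le n) le_rfl
      set W : Ω → ℝ × ℝ := fun ω => (Sn ω, a n ω) with hW_def
      have hWG : Measurable[𝒢 n] W := hSnG.prodMk (ha n)
      have hWm : Measurable W := hWG.mono (h𝒢le n) le_rfl
      have hIF : IndepFun W (Z (n+1)) P :=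
        indep_of_indep_of_le_left (hindep n) hWG.comap_le
      have hmap : P.map (fun ω => (W ω, Z (n+1) ω)) = (P.map W).prod (gaussianReal m v) := by
        rw [← hZgauss (n+1)]
        exact (indepFun_iff_map_prod_eq_prod_map_map hWm.aemeasurable
          (hZmeas (n+1)).aemeasurable).1 hIF
      set G : (ℝ × ℝ) × ℝ → ℝ≥0∞ :=
        fun p => ENNReal.ofReal (rexp (-α * (p.1.1 + p.1.2 * p.2))) with hG_def
      have hG : Measurable G := by
        apply ENNReal.measurable_ofReal.comp
        apply Real.measurable_exp.comp
        exact ((measurable_fst.comp measurable_fst).add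
          ((measurable_snd.comp measurable_fst).mul measurable_snd)).const_mul (-α)
      have hGsplit : ∀ w : ℝ × ℝ, ∀ z : ℝ, G (w, z)
          = ENNReal.ofReal (rexp (-α * w.1)) * ENNReal.ofReal (rexp ((-α * w.2) * z)) := by
        intro w z
        have : -α * (w.1 + w.2 * z) = -α * w.1 + (-α * w.2) * z := by ring
        rw [hG_def]
        simp only
        rw [this, Real.exp_add, ENNReal.ofReal_mul (Real.exp_pos _).le]
      have hmf : Measurable fun w : ℝ × ℝ => ENNReal.ofReal (rexp (-α * w.1)) :=
        ENNReal.measurable_ofReal.comp (Real.measurable_exp.comp (measurable_fst.const_mul (-α)))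
      have hinner : ∀ w : ℝ × ℝ,
          ∫⁻ z, G (w, z) ∂(gaussianReal m v)
            = ENNReal.ofReal (rexp (-α * w.1))
              * ENNReal.ofReal (rexp ((-α * w.2) * m + v * (-α * w.2) ^ 2 / 2)) := by
        intro w
        simp only [hGsplit]
        rw [lintegral_const_mul _
          (by fun_prop : Measurable fun z : ℝ => ENNReal.ofReal (rexp (-α * w.2 * z))),
          lintegral_exp_gauss hvne]
      calc ENNReal.ofReal (rexp (-(((n:ℕ)+1 : ℕ) * q)))
          = ENNReal.ofReal (rexp (-((n : ℝ) * q))) * ENNReal.ofReal (rexp (-q)) := by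
            rw [← ENNReal.ofReal_mul (Real.exp_pos _).le, ← Real.exp_add]
            congr 2
            push_cast
            ring
        _ ≤ (∫⁻ ω, ENNReal.ofReal (rexp (-α * Sn ω)) ∂P) * ENNReal.ofReal (rexp (-q)) :=
            mul_le_mul_left ih _
        _ = (∫⁻ w, ENNReal.ofReal (rexp (-α * w.1)) ∂(P.map W)) * ENNReal.ofReal (rexp (-q)) := by
            rw [lintegral_map hmf hWm]
        _ = ∫⁻ w, ENNReal.ofReal (rexp (-α * w.1)) * ENNReal.ofReal (rexp (-q)) ∂(P.map W) :=
            (lintegral_mul_const _ hmf).symm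
        _ ≤ ∫⁻ w, ENNReal.ofReal (rexp (-α * w.1))
              * ENNReal.ofReal (rexp ((-α * w.2) * m + v * (-α * w.2) ^ 2 / 2)) ∂(P.map W) := by
            apply lintegral_mono
            intro w
            apply mul_le_mul_right
            apply ENNReal.ofReal_le_ofReal
            apply Real.exp_le_exp.2
            rw [hvcoe]
            exact key_exp w.2
        _ = ∫⁻ w, ∫⁻ z, G (w, z) ∂(gaussianReal m v) ∂(P.map W) := by
            exact lintegral_congr fun w => (hinner w).symm
        _ = ∫⁻ p, G p ∂((P.map W).prod (gaussianReal m v)) :=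
            (lintegral_prod _ hG.aemeasurable).symm
        _ = ∫⁻ p, G p ∂(P.map (fun ω => (W ω, Z (n+1) ω))) := by rw [hmap]
        _ = ∫⁻ ω, G (W ω, Z (n+1) ω) ∂P := lintegral_map hG (hWm.prodMk (hZmeas (n+1)))
        _ = ∫⁻ ω, ENNReal.ofReal
              (rexp (-α * ∑ t ∈ Finset.range (n+1), a t ω * Z (t+1) ω)) ∂P := by
            apply lintegral_congr
            intro ω
            rw [hG_def]
            simp only [Finset.sum_range_succ]
            rfl
  -- the exact value for the constant strategy
  set c : ℝ := m / (α * σ ^ 2) with hc_def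
  have hcexp : (-α * c) * m + v * (-α * c) ^ 2 / 2 = -q := by
    rw [hvcoe, hq_def, hc_def]
    field_simp
    ring
  have keyeq : ∀ n : ℕ,
      ∫⁻ ω, ENNReal.ofReal (rexp (-α * ∑ t ∈ Finset.range n, c * Z (t+1) ω)) ∂P
        = ENNReal.ofReal (rexp (-((n : ℝ) * q))) := by
    intro n
    induction n with
    | zero => simp
    | succ n ih =>
      set Sn : Ω → ℝ := fun ω => ∑ t ∈ Finset.range n, c * Z (t+1) ω with hSn_def
      have hSnG : Measurable[𝒢 n] Sn := by
        apply Finset.measurable_sum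
        intro t ht
        have htn : t < n := Finset.mem_range.1 ht
        exact (hZ𝒢 (Nat.succ_le_succ (Nat.zero_le t)) htn).const_mul c
      have hf : Measurable[𝒢 n] fun ω => ENNReal.ofReal (rexp (-α * Sn ω)) :=
        (ENNReal.measurable_ofReal.comp (Real.measurable_exp.comp measurable_id)).comp
          (hSnG.const_mul (-α))
      have hg : Measurable[MeasurableSpace.comap (Z (n+1)) Real.measurableSpace]
          fun ω => ENNReal.ofReal (rexp ((-α * c) * Z (n+1) ω)) := by
        exact (ENNReal.measurable_ofReal.comp
          (Real.measurable_exp.comp (measurable_id.const_mul (-α * c)))).comp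
          (Measurable.of_comap_le le_rfl)
      have hsplit : ∀ ω, ENNReal.ofReal
          (rexp (-α * ∑ t ∈ Finset.range (n+1), c * Z (t+1) ω))
          = ENNReal.ofReal (rexp (-α * Sn ω))
            * ENNReal.ofReal (rexp ((-α * c) * Z (n+1) ω)) := by
        intro ω
        rw [← ENNReal.ofReal_mul (Real.exp_pos _).le, ← Real.exp_add]
        congr 2
        rw [Finset.sum_range_succ]
        ring
      calc ∫⁻ ω, ENNReal.ofReal (rexp (-α * ∑ t ∈ Finset.range (n+1), c * Z (t+1) ω)) ∂P
          = ∫⁻ ω, (fun ω => ENNReal.ofReal (rexp (-α * Sn ω))) ω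
              * (fun ω => ENNReal.ofReal (rexp ((-α * c) * Z (n+1) ω))) ω ∂P :=
            lintegral_congr hsplit
        _ = (∫⁻ ω, ENNReal.ofReal (rexp (-α * Sn ω)) ∂P)
              * ∫⁻ ω, ENNReal.ofReal (rexp ((-α * c) * Z (n+1) ω)) ∂P :=
            lintegral_mul_eq_lintegral_mul_lintegral_of_independent_measurableSpace
              (h𝒢le n) ((hZmeas (n+1)).comap_le) (hindep n) hf hg
        _ = ENNReal.ofReal (rexp (-((n : ℝ) * q))) * ENNReal.ofReal (rexp (-q)) := by
            rw [ih]
            congr 1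
            have : ∫⁻ ω, ENNReal.ofReal (rexp ((-α * c) * Z (n+1) ω)) ∂P
                = ∫⁻ x, ENNReal.ofReal (rexp ((-α * c) * x)) ∂(P.map (Z (n+1))) :=
              (lintegral_map
                (by fun_prop : Measurable fun x : ℝ => ENNReal.ofReal (rexp (-α * c * x)))
                (hZmeas (n+1))).symm
            rw [this, hZgauss (n+1), lintegral_exp_gauss hvne, hcexp]
        _ = ENNReal.ofReal (rexp (-(((n:ℕ)+1 : ℕ) * q))) := by
            rw [← ENNReal.ofReal_mul (Real.exp_pos _).le, ← Real.exp_add]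
            congr 2
            push_cast
            ring
  -- final assembly
  have htoReal : ∀ (f : Ω → ℝ), Measurable f →
      ∫ ω, rexp (-α * f ω) ∂P
        = (∫⁻ ω, ENNReal.ofReal (rexp (-α * f ω)) ∂P).toReal := by
    intro f hf
    rw [integral_eq_lintegral_of_nonneg_ae (ae_of_all _ fun ω => (Real.exp_pos _).le)
      (Real.measurable_exp.comp ((hf.const_mul (-α))) ).aestronglyMeasurable]
  have hRHS : (T : ℝ) * m ^ 2 / (2 * α * σ ^ 2) = α⁻¹ * ((T : ℝ) * q) := by
    rw [hq_def, div_eq_iff (by positivity : (2:ℝ) * α * σ ^ 2 ≠ 0)]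
    field_simp
    try ring
    try simp
  constructor
  · intro a ha _hb
    dsimp only
    have ham : ∀ t, Measurable (a t) := fun t => (ha t).mono (h𝒢le t) le_rfl
    have hSm : Measurable fun ω => ∑ t ∈ Finset.range T, a t ω * Z (t+1) ω :=
      Finset.measurable_sum _ fun t _ => (ham t).mul (hZmeas (t+1))
    rw [htoReal _ hSm]
    set L : ℝ≥0∞ := ∫⁻ ω, ENNReal.ofReal
      (rexp (-α * ∑ t ∈ Finset.range T, a t ω * Z (t+1) ω)) ∂P with hL_def
    have hL : ENNReal.ofReal (rexp (-((T : ℝ) * q))) ≤ L := key a ha T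
    rcases eq_or_ne L ∞ with hLtop | hLtop
    · rw [hLtop]
      simp only [ENNReal.toReal_top, Real.log_zero, mul_zero]
      positivity
    · have h0 : rexp (-((T : ℝ) * q)) ≤ L.toReal := by
        rw [← ENNReal.toReal_ofReal (Real.exp_pos (-((T : ℝ) * q))).le]
        exact ENNReal.toReal_mono hLtop hL
      have hpos : 0 < L.toReal := lt_of_lt_of_le (Real.exp_pos _) h0
      have hlog : -((T : ℝ) * q) ≤ Real.log L.toReal := (Real.le_log_iff_exp_le hpos).2 h0
      have := mul_le_mul_of_nonpos_left hlog (neg_nonpos.2 (inv_nonneg.2 hα.le))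
      calc -α⁻¹ * Real.log L.toReal ≤ -α⁻¹ * -((T : ℝ) * q) := this
        _ = α⁻¹ * ((T : ℝ) * q) := by ring
        _ = (T : ℝ) * m ^ 2 / (2 * α * σ ^ 2) := hRHS.symm
  · dsimp only
    have hSm : Measurable fun ω => ∑ t ∈ Finset.range T, c * Z (t+1) ω :=
      Finset.measurable_sum _ fun t _ => (hZmeas (t+1)).const_mul c
    rw [htoReal _ hSm, keyeq T, ENNReal.toReal_ofReal (Real.exp_pos _).le, Real.log_exp, hRHS]
    ring
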